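/- If a stack of isotropic layers has constant shear modulus c_{2323} = μ (but possibly varying c_{1111}), then the Backus average satisfies c_{1212}^TI = c_{2323}^TI = μ, c_{1133}^TI = c_{3333}^TI − 2μ, and c_{1111}^TI = c_{3333}^TI, i.e. the resulting medium is isotropic; in particular all three Thomsen parameters γ, δ, ε vanish. -/

import Mathlib

/-- Constant rigidity gives an isotropic Backus average: if all layers share the shear
modulus `μ`, then `c1212 = c2323 = μ`, `c1133 = c3333 − 2μ`, `c1111 = c3333`, and the
Thomsen parameters `γ`, `δ`, `ε` all vanish. -/
theorem constant_rigidity_isotropic (n : ℕ) (hn : 0 < n) (μ : ℝ) (hμ : 0 < μ)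
    (a : Fin n → ℝ) (ha : ∀ i, a i > 4 / 3 * μ) :
    let c3333 : ℝ := ((∑ i, (a i)⁻¹) / n)⁻¹
    let c2323 : ℝ := ((∑ _i : Fin n, μ⁻¹) / n)⁻¹
    let c1212 : ℝ := (∑ _i : Fin n, μ) / n
    let c1133 : ℝ := ((∑ i, (a i - 2 * μ) / a i) / n) * c3333
    let c1111 : ℝ := c3333 * ((∑ i, (a i - 2 * μ) / a i) / n) ^ 2
      + (∑ i, 4 * (a i - μ) * μ / a i) / n
    c1212 = μ ∧ c2323 = μ ∧ c1133 = c3333 - 2 * μ ∧ c1111 = c3333 ∧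
      (c1212 - c2323) / (2 * c2323) = 0 ∧
      ((c1133 + c2323) ^ 2 - (c3333 - c2323) ^ 2) / (2 * c3333 * (c3333 - c2323)) = 0 ∧
      (c1111 - c3333) / (2 * c3333) = 0 := by
  intro c3333 c2323 c1212 c1133 c1111
  have hnR : (0 : ℝ) < n := by exact_mod_cast hn
  have hn0 : (n : ℝ) ≠ 0 := ne_of_gt hnR
  have hapos : ∀ i, 0 < a i := fun i => lt_trans (by positivity) (ha i)
  have hai : ∀ i, a i ≠ 0 := fun i => ne_of_gt (hapos i)
  have hS : 0 < ∑ i, (a i)⁻¹ := by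
    haveI : Nonempty (Fin n) := Fin.pos_iff_nonempty.mp hn
    exact Finset.sum_pos (fun i _ => inv_pos.mpr (hapos i)) Finset.univ_nonempty
  set S : ℝ := ∑ i, (a i)⁻¹ with hSdef
  have hS0 : S ≠ 0 := ne_of_gt hS
  have h1 : (∑ i, (a i - 2 * μ) / a i) = n - 2 * μ * S := by
    have : ∀ i ∈ Finset.univ, (a i - 2 * μ) / a i = 1 - 2 * μ * (a i)⁻¹ := by
      intro i _
      field_simp [hai i]
    rw [Finset.sum_congr rfl this, Finset.sum_sub_distrib, Finset.sum_const,
      Finset.card_univ, Fintype.card_fin, ← Finset.mul_sum]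
    push_cast; ring
  have h2 : (∑ i, 4 * (a i - μ) * μ / a i) = 4 * μ * n - 4 * μ ^ 2 * S := by
    have : ∀ i ∈ Finset.univ, 4 * (a i - μ) * μ / a i = 4 * μ - 4 * μ ^ 2 * (a i)⁻¹ := by
      intro i _
      field_simp [hai i]
    rw [Finset.sum_congr rfl this, Finset.sum_sub_distrib, Finset.sum_const,
      Finset.card_univ, Fintype.card_fin, ← Finset.mul_sum]
    push_cast; ring
  have hc2323 : c2323 = μ := by
    show ((∑ _i : Fin n, μ⁻¹) / n)⁻¹ = μ
    rw [Finset.sum_const, Finset.card_univ, Fintype.card_fin, nsmul_eq_mul]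
    field_simp
  have hc1212 : c1212 = μ := by
    show (∑ _i : Fin n, μ) / n = μ
    rw [Finset.sum_const, Finset.card_univ, Fintype.card_fin, nsmul_eq_mul]
    field_simp
  have hc3333 : c3333 = n / S := by
    show ((∑ i, (a i)⁻¹) / n)⁻¹ = n / S
    rw [← hSdef]
    field_simp
  have hc1133 : c1133 = c3333 - 2 * μ := by
    show ((∑ i, (a i - 2 * μ) / a i) / n) * c3333 = c3333 - 2 * μ
    rw [h1, hc3333]
    field_simp
  have hc1111 : c1111 = c3333 := by
    show c3333 * ((∑ i, (a i - 2 * μ) / a i) / n) ^ 2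
      + (∑ i, 4 * (a i - μ) * μ / a i) / n = c3333
    rw [h1, h2, hc3333]
    field_simp
    ring
  refine ⟨hc1212, hc2323, hc1133, hc1111, ?_, ?_, ?_⟩
  · rw [hc1212, hc2323, sub_self, zero_div]
  · rw [hc1133, hc2323]
    ring_nf
  · rw [hc1111, sub_self, zero_div]
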